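/- Every cofinally complete metric space is an AUC space, i.e., every continuous real-valued function on a cofinally complete metric space is almost uniformly continuous. -/

import Mathlib

open Metric Filter

/-- A sequence is cofinally Cauchy if for every ε>0 there is an infinite index set
on which all pairwise distances are < ε. -/
def CofinallyCauchy {X : Type*} [MetricSpace X] (x : ℕ → X) : Prop :=
  ∀ ε > 0, ∃ N : Set ℕ, N.Infinite ∧ ∀ n ∈ N, ∀ j ∈ N, dist (x n) (x j) < ε

/-- A function is almost bounded if for every ε>0 there is δ>0 such that the image of
every set of diameter < δ is contained in a finite union of open ε-balls. -/
def AlmostBounded {X Y : Type*} [MetricSpace X] [MetricSpace Y] (f : X → Y) : Prop :=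
  ∀ ε > 0, ∃ δ > 0, ∀ A : Set X, EMetric.diam A < ENNReal.ofReal δ →
    ∃ B : Finset Y, f '' A ⊆ ⋃ b ∈ B, Metric.ball b ε

/-- A metric space is cofinally complete if every cofinally Cauchy sequence clusters. -/
def CofinallyComplete (X : Type*) [MetricSpace X] : Prop :=
  ∀ x : ℕ → X, CofinallyCauchy x → ∃ p : X, MapClusterPt p atTop x

/-- The local total boundedness functional. -/
noncomputable def tFun {X : Type*} [MetricSpace X] (x : X) : ℝ :=
  sSup {ε : ℝ | 0 < ε ∧ TotallyBounded (Metric.ball x ε)}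

/-- Every cofinally complete metric space is an AUC space: every continuous real-valued
function on it is almost uniformly continuous. -/
theorem cofinallyComplete_aucSpace {X : Type*} [MetricSpace X]
    (h : CofinallyComplete X) (f : X → ℝ) (hf : Continuous f) :
    AlmostBounded f := by
  -- Step 1: f is uniformly locally bounded
  have ulb : ∃ δ > 0, ∀ x : X, ∃ M : ℝ, ∀ y ∈ ball x δ, |f y| ≤ M := by
    by_contra hcon
    push_neg at hcon
    have hx : ∀ n : ℕ, ∃ x : X, ∀ M : ℝ, ∃ y, y ∈ ball x (1 / (n + 1)) ∧ M < |f y| := by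
      intro n
      obtain ⟨x, hx⟩ := hcon (1 / (n + 1)) (by positivity)
      exact ⟨x, fun M => hx M⟩
    choose x hx using hx
    have hy : ∀ n k : ℕ, ∃ y, y ∈ ball (x n) (1 / (n + 1)) ∧ ((n : ℝ) + k) < |f y| :=
      fun n k => hx n ((n : ℝ) + k)
    choose y hyb hyf using hy
    set e : ℕ × ℕ ≃ ℕ := Denumerable.eqv (ℕ × ℕ) with he
    set z : ℕ → X := fun i => y (e.symm i).1 (e.symm i).2 with hz
    have hcc : CofinallyCauchy z := by
      intro ε hε
      obtain ⟨n, hn⟩ : ∃ n : ℕ, 2 / ((n : ℝ) + 1) < ε := by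
        obtain ⟨n, hn⟩ := exists_nat_gt (2 / ε)
        refine ⟨n, ?_⟩
        rw [div_lt_iff₀ (by positivity)]
        rw [div_lt_iff₀ hε] at hn
        nlinarith
      refine ⟨Set.range (fun k => e (n, k)), ?_, ?_⟩
      · apply Set.infinite_range_of_injective
        intro a b hab
        have := congrArg (fun i => (e.symm i).2) hab
        simpa using this
      · rintro i ⟨a, rfl⟩ j ⟨b, rfl⟩
        have hza : z (e (n, a)) = y n a := by simp [hz]
        have hzb : z (e (n, b)) = y n b := by simp [hz]
        rw [hza, hzb]
        have h1 : dist (y n a) (x n) < 1 / (n + 1) := mem_ball.mp (hyb n a)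
        have h2 : dist (y n b) (x n) < 1 / (n + 1) := mem_ball.mp (hyb n b)
        calc dist (y n a) (y n b) ≤ dist (y n a) (x n) + dist (y n b) (x n) :=
              dist_triangle_right _ _ _
          _ < 1 / (n + 1) + 1 / (n + 1) := by linarith
          _ = 2 / ((n : ℝ) + 1) := by ring
          _ < ε := hn
    obtain ⟨p, hp⟩ := h z hcc
    -- f is bounded near p
    obtain ⟨r, hr, hball⟩ : ∃ r > 0, ∀ q ∈ ball p r, |f q| < |f p| + 1 := by
      have hU : {q : X | |f q| < |f p| + 1} ∈ nhds p := by
        have : IsOpen {q : X | |f q| < |f p| + 1} :=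
          isOpen_lt (hf.abs) continuous_const
        exact this.mem_nhds (by simp)
      obtain ⟨r, hr, hsub⟩ := Metric.mem_nhds_iff.mp hU
      exact ⟨r, hr, fun q hq => hsub hq⟩
    have hfreq : ∃ᶠ i in atTop, z i ∈ ball p r :=
      (mapClusterPt_iff_frequently.mp hp) (ball p r) (ball_mem_nhds p hr)
    have hSinf : {i : ℕ | z i ∈ ball p r}.Infinite :=
      Nat.frequently_atTop_iff_infinite.mp hfreq
    obtain ⟨m, hm⟩ := exists_nat_ge (|f p| + 1)
    have hTfin : ({q : ℕ × ℕ | (q.1 : ℝ) + q.2 < |f p| + 1}).Finite := by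
      apply Set.Finite.subset ((Set.finite_Iic m).prod (Set.finite_Iic m))
      rintro ⟨a, b⟩ hab
      simp only [Set.mem_setOf_eq] at hab
      have ha' : (a : ℝ) ≤ m := le_trans (by linarith [Nat.cast_nonneg (α := ℝ) b]) hm
      have hb' : (b : ℝ) ≤ m := le_trans (by linarith [Nat.cast_nonneg (α := ℝ) a]) hm
      exact ⟨Set.mem_Iic.mpr (by exact_mod_cast ha'), Set.mem_Iic.mpr (by exact_mod_cast hb')⟩
    have hsub : {i : ℕ | z i ∈ ball p r} ⊆
        (fun i => e.symm i) ⁻¹' {q : ℕ × ℕ | (q.1 : ℝ) + q.2 < |f p| + 1} := by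
      intro i hi
      have h1 : |f (z i)| < |f p| + 1 := hball _ hi
      have h2 : ((e.symm i).1 : ℝ) + (e.symm i).2 < |f (z i)| := hyf _ _
      exact lt_trans h2 h1
    exact hSinf (Set.Finite.subset (hTfin.preimage (Equiv.injective e.symm).injOn) hsub)
  -- Step 2: deduce almost boundedness
  obtain ⟨δ, hδ, hMall⟩ := ulb
  intro ε hε
  refine ⟨δ, hδ, fun A hA => ?_⟩
  rcases A.eq_empty_or_nonempty with rfl | ⟨a, ha⟩
  · exact ⟨∅, by simp⟩
  · obtain ⟨M, hM⟩ := hMall a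
    have hsubA : A ⊆ ball a δ := by
      intro w hw
      have h1 : edist w a ≤ EMetric.diam A := EMetric.edist_le_diam_of_mem hw ha
      have h2 : edist w a < ENNReal.ofReal δ := lt_of_le_of_lt h1 hA
      exact mem_ball.mpr (edist_lt_ofReal.mp h2)
    have himg : f '' A ⊆ Set.Icc (-M) M := by
      rintro _ ⟨w, hw, rfl⟩
      have := hM w (hsubA hw)
      exact abs_le.mp this
    obtain ⟨t, htf, hts⟩ := Metric.totallyBounded_iff.mp (totallyBounded_Icc (-M) M) ε hε
    refine ⟨htf.toFinset, fun v hv => ?_⟩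
    have := hts (himg hv)
    simpa [Set.Finite.mem_toFinset] using this
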